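/- Let t be an SL₂-tiling. (i) If integers b, v satisfy t(b,v−1) < t(b,v) and t(b,v) > t(b,v+1) (a local maximum in the b-th row), then t(c,v) = t(c,v−1) + t(c,v+1) for every integer c, and the function t' defined by t'(i,j) = t(i,j) for j < v and t'(i,j) = t(i,j+1) for j ≥ v (deleting the v-th column) is again an SL₂-tiling. (ii) Symmetrically, if t(b−1,v) < t(b,v) and t(b,v) > t(b+1,v) (a local maximum in the v-th column), then t(b,w) = t(b−1,w) + t(b+1,w) for every integer w, and the function t'' defined by t''(i,j) = t(i,j) for i < b and t''(i,j) = t(i+1,j) for i ≥ b (deleting the b-th row) is again an SL₂-tiling. -/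

import Mathlib

/-- An `SL₂`-tiling: all entries are `≥ 1` and every adjacent `2×2` minor is `1`. -/
def IsSL2Tiling (t : ℤ → ℤ → ℤ) : Prop :=
  (∀ i j, 1 ≤ t i j) ∧
  (∀ i j, t i j * t (i+1) (j+1) - t i (j+1) * t (i+1) j = 1)

lemma transpose_tiling {t : ℤ → ℤ → ℤ} (ht : IsSL2Tiling t) :
    IsSL2Tiling (fun i j => t j i) := by
  obtain ⟨h1, h2⟩ := ht
  exact ⟨fun i j => h1 j i, fun i j => by linear_combination h2 j i⟩

lemma delete_col (t : ℤ → ℤ → ℤ) (ht : IsSL2Tiling t)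
    (b v : ℤ) (hl : t b (v-1) < t b v) (hr : t b (v+1) < t b v) :
    (∀ c : ℤ, t c v = t c (v-1) + t c (v+1)) ∧
    IsSL2Tiling (fun i j => if j < v then t i j else t i (j+1)) := by
  obtain ⟨hpos, hdet⟩ := ht
  set a : ℤ → ℤ := fun i => t i (v-1) * t (i+1) (v+1) - t i (v+1) * t (i+1) (v-1) with ha
  have key : ∀ i, a i * t i v = t i (v-1) + t i (v+1) ∧
      a i * t (i+1) v = t (i+1) (v-1) + t (i+1) (v+1) := by
    intro i
    have d1 := hdet i (v-1)
    have d2 := hdet i v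
    rw [show v - 1 + 1 = v by ring] at d1
    constructor
    · simp only [ha]
      linear_combination t i (v-1) * d2 + t i (v+1) * d1
    · simp only [ha]
      linear_combination t (i+1) (v+1) * d1 + t (i+1) (v-1) * d2
  have hstep : ∀ i, a i = a (i+1) := by
    intro i
    have h1 := (key i).2
    have h2 := (key (i+1)).1
    have hp := hpos (i+1) v
    have hz : (a i - a (i+1)) * t (i+1) v = 0 := by
      rw [sub_mul, h1, h2]; ring
    rcases mul_eq_zero.1 hz with h | h
    · linarith
    · linarith
  have hconst : ∀ c, a c = a b := by
    intro c
    have hd : ∀ d : ℤ, a (b + d) = a b := by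
      intro d
      induction d using Int.induction_on with
      | zero => simp
      | succ i ih =>
        rw [show b + (i + 1 : ℤ) = (b + i) + 1 by ring, ← hstep (b + i)]
        exact ih
      | pred i ih =>
        rw [show b + (-i - 1 : ℤ) = (b + (-i - 1)) by ring]
        have := hstep (b + (-i - 1))
        rw [show b + (-i - 1) + 1 = b + (-i : ℤ) by ring] at this
        rw [this]; exact ih
    have := hd (c - b)
    rwa [show b + (c - b) = c by ring] at this
  have hab : a b = 1 := by
    have h := (key b).1
    have hp := hpos b v
    have hl2 := hpos b (v-1)
    have hr2 := hpos b (v+1)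
    have h1 : a b ≤ 1 := by nlinarith
    have h2 : 1 ≤ a b := by nlinarith
    omega
  have hsum : ∀ c : ℤ, t c v = t c (v-1) + t c (v+1) := by
    intro c
    have h := (key c).1
    rw [hconst c, hab, one_mul] at h
    exact h
  refine ⟨hsum, ⟨fun i j => by dsimp only; split <;> apply hpos, fun i j => ?_⟩⟩
  dsimp only
  rcases lt_trichotomy (j+1) v with h | h | h
  · rw [if_pos (by omega : j < v), if_pos h, if_pos (by omega : j < v), if_pos h]
    exact hdet i j
  · rw [if_pos (by omega : j < v), if_neg (by omega : ¬ j + 1 < v),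
      if_pos (by omega : j < v), if_neg (by omega : ¬ j + 1 < v)]
    have hav : a i = 1 := (hconst i).trans hab
    rw [ha] at hav
    simp only at hav
    rw [show j = v - 1 by omega, show v - 1 + 1 + 1 = v + 1 by ring]
    exact hav
  · rw [if_neg (by omega : ¬ j < v), if_neg (by omega : ¬ j + 1 < v),
      if_neg (by omega : ¬ j < v), if_neg (by omega : ¬ j + 1 < v)]
    exact hdet i (j+1)

theorem delete_row_or_column (t : ℤ → ℤ → ℤ) (ht : IsSL2Tiling t) :
    -- (i) local maximum in a row: delete the v-th column
    (∀ b v : ℤ, t b (v-1) < t b v → t b (v+1) < t b v →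
      (∀ c : ℤ, t c v = t c (v-1) + t c (v+1)) ∧
      IsSL2Tiling (fun i j => if j < v then t i j else t i (j+1))) ∧
    -- (ii) local maximum in a column: delete the b-th row
    (∀ b v : ℤ, t (b-1) v < t b v → t (b+1) v < t b v →
      (∀ w : ℤ, t b w = t (b-1) w + t (b+1) w) ∧
      IsSL2Tiling (fun i j => if i < b then t i j else t (i+1) j)) := by
  constructor
  · intro b v hl hr
    exact delete_col t ht b v hl hr
  · intro b v hl hr
    obtain ⟨hsum, htil⟩ := delete_col (fun i j => t j i) (transpose_tiling ht) v b hl hr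
    refine ⟨fun w => hsum w, ?_⟩
    exact transpose_tiling htil
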